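/- If C is PP, then C is purified (in particular, C is semiprime and for all distinct minimal primes p,q of C there exists a complemented a ∈ C with a ≤ p and a⊥ ≤ q). -/
import Mathlib


open CompleteLattice

/-- A complete lattice equipped with a commutator operation, axiomatizing the congruence
lattice of an algebra in a semidegenerate congruence-modular variety whose compact
congruences are closed under the commutator. -/
class CommutatorLattice (C : Type*) [CompleteLattice C] where
  comm : C → C → C
  comm_comm : ∀ a b : C, comm a b = comm b a
  comm_sSup : ∀ (s : Set C) (b : C), comm (sSup s) b = ⨆ a ∈ s, comm a b
  comm_le_inf : ∀ a b : C, comm a b ≤ a ⊓ b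
  comm_top : ∀ a : C, comm a ⊤ = a
  compactlyGenerated : ∀ x : C,
    ∃ s : Set C, (∀ a ∈ s, IsCompactElement a) ∧ sSup s = x
  top_isCompact : IsCompactElement (⊤ : C)
  comm_isCompact : ∀ a b : C, IsCompactElement a → IsCompactElement b →
    IsCompactElement (comm a b)

namespace CommutatorLattice

variable {C : Type*} [CompleteLattice C] [CommutatorLattice C]

/-- The residuation `a → b := ⨆ {c | [a,c] ≤ b}`. -/
def resid (a b : C) : C := sSup {c : C | comm a c ≤ b}

/-- The annihilator `a⊥ := a → ⊥`. -/
def ann (a : C) : C := resid a ⊥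

/-- Iterated commutator: `cpow a n = [a,a]^n`, with the convention `[a,a]^0 = a`.
Note that `[a,b]^n` for `n ≥ 1` equals `cpow (comm a b) (n-1)`. -/
def cpow (a : C) : ℕ → C
  | 0 => a
  | n + 1 => comm (cpow a n) (cpow a n)

/-- Prime elements: `p ≠ ⊤` and `[a,b] ≤ p` implies `a ≤ p` or `b ≤ p`. -/
def IsPrime (p : C) : Prop := p ≠ ⊤ ∧ ∀ a b : C, comm a b ≤ p → a ≤ p ∨ b ≤ p

/-- The radical `ρ(a) := ⨅ {p prime | a ≤ p}`. -/
def radical (a : C) : C := sInf {p : C | IsPrime p ∧ a ≤ p}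

variable (C) in
/-- `C` is semiprime if `ρ(⊥) = ⊥`. -/
def Semiprime : Prop := radical (⊥ : C) = ⊥

variable (C) in
/-- Condition (⋆): for all compact `a`, `b` and all `n ≥ 1` there is `m ≥ 0` with
`[[a,a]^m, [b,b]^m] ≤ [a,b]^n`.  Here `cpow (comm a b) n = [a,b]^(n+1)`, so `n : ℕ`
ranges exactly over the exponents `≥ 1` of the paper. -/
def Star : Prop := ∀ a b : C, IsCompactElement a → IsCompactElement b →
  ∀ n : ℕ, ∃ m : ℕ, comm (cpow a m) (cpow b m) ≤ cpow (comm a b) n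

/-- Pure elements: `t ⊔ a⊥ = ⊤` for every compact `a ≤ t`. -/
def IsPure (t : C) : Prop := ∀ a : C, IsCompactElement a → a ≤ t → t ⊔ ann a = ⊤

/-- w-pure elements: `t ⊔ (a → ρ(⊥)) = ⊤` for every compact `a ≤ t`. -/
def IsWPure (t : C) : Prop :=
  ∀ a : C, IsCompactElement a → a ≤ t → t ⊔ resid a (radical ⊥) = ⊤

/-- Complemented elements. -/
def IsComplEl (a : C) : Prop := ∃ b : C, a ⊔ b = ⊤ ∧ a ⊓ b = ⊥

/-- Regular elements: joins of sets of complemented elements. -/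
def IsRegular (t : C) : Prop := ∃ S : Set C, (∀ a ∈ S, IsComplEl a) ∧ t = sSup S

/-- Max-regular elements: maximal among regular elements distinct from `⊤`. -/
def IsMaxRegular (t : C) : Prop :=
  IsRegular t ∧ t ≠ ⊤ ∧ ∀ u : C, IsRegular u → u ≠ ⊤ → t ≤ u → u = t

/-- Maximal elements of `C \ {⊤}`. -/
def IsMaximal (p : C) : Prop := p ≠ ⊤ ∧ ∀ q : C, q ≠ ⊤ → p ≤ q → q = p

/-- Minimal primes. -/
def IsMinPrime (p : C) : Prop := IsPrime p ∧ ∀ q : C, IsPrime q → q ≤ p → q = p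

variable (C) in
/-- `C` is mp if every prime lies above a unique minimal prime. -/
def MP : Prop := ∀ p : C, IsPrime p → ∃! q : C, IsMinPrime q ∧ q ≤ p

variable (C) in
/-- `C` is PF if `a⊥` is pure for every compact `a`. -/
def PF : Prop := ∀ a : C, IsCompactElement a → IsPure (ann a)

variable (C) in
/-- `C` is PP if `a⊥` is complemented for every compact `a`. -/
def PP : Prop := ∀ a : C, IsCompactElement a → IsComplEl (ann a)

/-- `O(p) := ⨆ {a compact | a⊥ ≰ p}`. -/
def O (p : C) : C := sSup {a : C | IsCompactElement a ∧ ¬ ann a ≤ p}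

variable (C) in
/-- `C` is normal. -/
def Normal : Prop := ∀ t u : C, t ⊔ u = ⊤ →
  ∃ a b : C, t ⊔ a = ⊤ ∧ u ⊔ b = ⊤ ∧ comm a b = ⊥

variable (C) in
/-- `C` is B-normal. -/
def BNormal : Prop := ∀ t u : C, t ⊔ u = ⊤ →
  ∃ a b : C, IsComplEl a ∧ IsComplEl b ∧ t ⊔ a = ⊤ ∧ u ⊔ b = ⊤ ∧ comm a b = ⊥

variable (C) in
/-- `C` is purified. -/
def Purified : Prop := ∀ p q : C, IsMinPrime p → IsMinPrime q → p ≠ q →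
  ∃ a : C, IsComplEl a ∧ a ≤ p ∧ ann a ≤ q

variable (C) in
/-- The prime spectrum of `C`. -/
abbrev Spec := {p : C // IsPrime p}

variable (C) in
/-- The Zariski topology on `Spec C`: the closed sets are the `V(t) = {p | t ≤ p}`,
equivalently the topology generated by the sets `D(t) = {p | t ≰ p}`. -/
def zariskiTop : TopologicalSpace (Spec C) :=
  TopologicalSpace.generateFrom {U : Set (Spec C) | ∃ t : C, U = {p : Spec C | ¬ t ≤ p.1}}

variable (C) in
/-- The flat topology on `Spec C`: generated by the open basis `V(a)`, `a` compact. -/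
def flatTop : TopologicalSpace (Spec C) :=
  TopologicalSpace.generateFrom
    {U : Set (Spec C) | ∃ a : C, IsCompactElement a ∧ U = {p : Spec C | a ≤ p.1}}

/- ### Auxiliary lemmas -/

lemma comm_sup_left' (a b y : C) : comm (a ⊔ b) y = comm a y ⊔ comm b y := by
  have := comm_sSup ({a, b} : Set C) y
  rwa [sSup_pair, iSup_pair] at this

lemma comm_mono_left' {a a' : C} (b : C) (h : a ≤ a') : comm a b ≤ comm a' b := by
  have h2 := comm_sup_left' a a' b
  rw [sup_eq_right.mpr h] at h2
  rw [h2]; exact le_sup_left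

lemma comm_mono' {a a' b b' : C} (h : a ≤ a') (h' : b ≤ b') : comm a b ≤ comm a' b' := by
  calc comm a b ≤ comm a' b := comm_mono_left' b h
    _ = comm b a' := comm_comm _ _
    _ ≤ comm b' a' := comm_mono_left' a' h'
    _ = comm a' b' := comm_comm _ _

lemma comm_ann' (a : C) : comm a (ann a) = ⊥ := by
  have : comm (ann a) a ≤ ⊥ := by
    rw [ann, resid, comm_sSup]
    exact iSup₂_le fun c hc => le_of_eq_of_le (comm_comm c a) hc
  rw [comm_comm] at this
  exact le_bot_iff.mp this

lemma le_ann_iff' {a b : C} : b ≤ ann a ↔ comm a b ≤ ⊥ := by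
  constructor
  · intro hb
    calc comm a b ≤ comm a (ann a) := comm_mono' le_rfl hb
      _ = ⊥ := comm_ann' a
  · intro hb; exact le_sSup hb

lemma le_radical' (a : C) : a ≤ radical a := le_sInf fun p hp => hp.2

lemma radical_le_prime' {a p : C} (hp : IsPrime p) (h : a ≤ p) : radical a ≤ p :=
  sInf_le ⟨hp, h⟩

lemma radical_mono' {a b : C} (h : a ≤ b) : radical a ≤ radical b :=
  sInf_le_sInf fun p hp => ⟨hp.1, h.trans hp.2⟩

lemma cpow_isCompact' {a : C} (ha : IsCompactElement a) (n : ℕ) :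
    IsCompactElement (cpow a n) := by
  induction n with
  | zero => exact ha
  | succ n ih => exact comm_isCompact _ _ ih ih

lemma cpow_succ_le' (a : C) (n : ℕ) : cpow a (n + 1) ≤ cpow a n :=
  (comm_le_inf _ _).trans inf_le_left

lemma cpow_antitone' (a : C) : Antitone (cpow a) :=
  antitone_nat_of_succ_le (cpow_succ_le' a)

lemma le_of_cpow_le_prime' {a p : C} (hp : IsPrime p) {n : ℕ} (h : cpow a n ≤ p) : a ≤ p := by
  induction n with
  | zero => exact h
  | succ n ih =>
    rcases hp.2 _ _ h with h' | h' <;> exact ih h'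

/-- Zorn-type existence of a prime avoiding a "multiplicatively closed" set of
compact elements. -/
lemma exists_prime_avoid' (T : Set C) (hne : T.Nonempty)
    (hcomp : ∀ t ∈ T, IsCompactElement t)
    (hbot : ∀ t ∈ T, ¬ t ≤ (⊥ : C))
    (hmul : ∀ s ∈ T, ∀ t ∈ T, ∃ u ∈ T, u ≤ comm s t) :
    ∃ p : C, IsPrime p ∧ ∀ t ∈ T, ¬ t ≤ p := by
  set S : Set C := {x : C | ∀ t ∈ T, ¬ t ≤ x} with hS
  have hbotS : (⊥ : C) ∈ S := hbot
  obtain ⟨m, -, hm⟩ := zorn_le_nonempty₀ S (fun c hc hchain y hy => by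
    refine ⟨sSup c, ?_, fun z hz => le_sSup hz⟩
    intro t ht hle
    have htc := hcomp t ht
    rw [isCompactElement_iff_le_of_directed_sSup_le] at htc
    obtain ⟨x, hx, hle'⟩ := htc c ⟨y, hy⟩ (hchain.directedOn) hle
    exact hc hx t ht hle') ⊥ hbotS
  refine ⟨m, ⟨?_, ?_⟩, hm.1⟩
  · rintro rfl
    obtain ⟨t, ht⟩ := hne
    exact hm.1 t ht le_top
  · intro u v huv
    by_contra hcon
    push_neg at hcon
    obtain ⟨hu, hv⟩ := hcon
    have hmu : m ⊔ u ∉ S := by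
      intro hmem
      exact hu (le_sup_right.trans (hm.2 hmem le_sup_left))
    have hmv : m ⊔ v ∉ S := by
      intro hmem
      exact hv (le_sup_right.trans (hm.2 hmem le_sup_left))
    simp only [hS, Set.mem_setOf_eq, not_forall] at hmu hmv
    obtain ⟨t1, ht1, ht1le⟩ := hmu
    obtain ⟨t2, ht2, ht2le⟩ := hmv
    push_neg at ht1le ht2le
    obtain ⟨w, hw, hwle⟩ := hmul t1 ht1 t2 ht2
    have hkey : comm t1 t2 ≤ m := by
      calc comm t1 t2 ≤ comm (m ⊔ u) (m ⊔ v) := comm_mono' ht1le ht2le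
        _ = comm m (m ⊔ v) ⊔ comm u (m ⊔ v) := comm_sup_left' _ _ _
        _ ≤ m ⊔ comm u (m ⊔ v) :=
            sup_le_sup_right ((comm_le_inf _ _).trans inf_le_left) _
        _ = m ⊔ (comm m u ⊔ comm v u) := by rw [comm_comm u (m ⊔ v), comm_sup_left']
        _ ≤ m := by
            refine sup_le le_rfl (sup_le ((comm_le_inf _ _).trans inf_le_left) ?_)
            rw [comm_comm]; exact huv
    exact hm.1 w hw (hwle.trans hkey)

lemma pp_bot' (h : PP C) {a : C} (ha : IsCompactElement a) (h2 : comm a a = ⊥) :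
    a = ⊥ := by
  obtain ⟨f, hsup, hinf⟩ := h a ha
  have haann : a ≤ ann a := le_ann_iff'.mpr (le_of_eq h2)
  have hf : f ≤ ann a := by
    refine le_ann_iff'.mpr ?_
    calc comm a f ≤ a ⊓ f := comm_le_inf _ _
      _ ≤ ann a ⊓ f := inf_le_inf_right f haann
      _ = ⊥ := hinf
  have hfbot : f = ⊥ := by
    have : f ≤ ann a ⊓ f := le_inf hf le_rfl
    rw [hinf] at this
    exact le_bot_iff.mp this
  have hanntop : ann a = ⊤ := by
    rw [hfbot, sup_bot_eq] at hsup; exact hsup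
  calc a = comm a ⊤ := (comm_top a).symm
    _ = comm a (ann a) := by rw [hanntop]
    _ = ⊥ := comm_ann' a

lemma pp_semiprime' (h : PP C) : Semiprime C := by
  have key : ∀ a : C, IsCompactElement a → a ≤ radical ⊥ → a = ⊥ := by
    intro a ha hle
    by_contra hne
    have hcp : ∀ n, IsCompactElement (cpow a n) := cpow_isCompact' ha
    have hnb : ∀ n, cpow a n ≠ ⊥ := by
      intro n
      induction n with
      | zero => exact hne
      | succ n ih =>
        intro hb
        exact ih (pp_bot' h (hcp n) hb)
    obtain ⟨p, hp, hpavoid⟩ := exists_prime_avoid' (Set.range (cpow a))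
      ⟨a, 0, rfl⟩
      (by rintro - ⟨n, rfl⟩; exact hcp n)
      (by rintro - ⟨n, rfl⟩ hb; exact hnb n (le_bot_iff.mp hb))
      (by
        rintro - ⟨n, rfl⟩ - ⟨m, rfl⟩
        refine ⟨cpow a (max n m + 1), ⟨max n m + 1, rfl⟩, ?_⟩
        exact comm_mono' (cpow_antitone' a (le_max_left n m))
          (cpow_antitone' a (le_max_right n m)))
    have : a ≤ p := hle.trans (radical_le_prime' hp bot_le)
    exact hpavoid a ⟨0, rfl⟩ this
  obtain ⟨s, hs, hsup⟩ := compactlyGenerated (radical (⊥ : C))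
  rw [Semiprime, ← hsup]
  refine le_bot_iff.mp (sSup_le fun a has => ?_)
  rw [key a (hs a has) (hsup ▸ le_sSup has)]

/-- The multiplicative closure of the compacts not below `q` together with `b`. -/
inductive TMem (q b : C) : C → Prop
  | gen {d : C} : IsCompactElement d → ¬ d ≤ q → TMem q b d
  | base : TMem q b b
  | mul {s t : C} : TMem q b s → TMem q b t → TMem q b (comm s t)

lemma tmem_invariant' {q b t : C} (hq : IsPrime q) (ht : TMem q b t) :
    ∃ s : C, IsCompactElement s ∧ ¬ s ≤ q ∧ ∃ n : ℕ, comm s (cpow b n) ≤ radical t := by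
  induction ht with
  | @gen d hd hdq =>
    exact ⟨d, hd, hdq, 0, (comm_le_inf _ _).trans (inf_le_left.trans (le_radical' d))⟩
  | base =>
    refine ⟨⊤, top_isCompact, fun hle => hq.1 (top_le_iff.mp hle), 0, ?_⟩
    rw [comm_comm, comm_top]
    exact le_radical' b
  | @mul t1 t2 h1 h2 ih1 ih2 =>
    obtain ⟨s1, hs1c, hs1q, n1, hle1⟩ := ih1
    obtain ⟨s2, hs2c, hs2q, n2, hle2⟩ := ih2
    refine ⟨comm s1 s2, comm_isCompact _ _ hs1c hs2c, ?_, max n1 n2, ?_⟩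
    · intro hle
      rcases hq.2 _ _ hle with h' | h'
      · exact hs1q h'
      · exact hs2q h'
    · have key1 : comm (comm s1 s2) (cpow b (max n1 n2)) ≤ radical t1 := by
        refine le_trans (comm_mono' ((comm_le_inf _ _).trans inf_le_left)
          (cpow_antitone' b (le_max_left n1 n2))) hle1
      have key2 : comm (comm s1 s2) (cpow b (max n1 n2)) ≤ radical t2 := by
        refine le_trans (comm_mono' ((comm_le_inf _ _).trans inf_le_right)
          (cpow_antitone' b (le_max_right n1 n2))) hle2
      refine le_trans (le_inf key1 key2) (le_sInf fun p hp => ?_)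
      rcases hp.1.2 _ _ hp.2 with h' | h'
      · exact inf_le_left.trans (radical_le_prime' hp.1 h')
      · exact inf_le_right.trans (radical_le_prime' hp.1 h')

lemma ann_not_le_of_minPrime' (hsp : Semiprime C) {q b : C} (hq : IsMinPrime q)
    (hb : IsCompactElement b) (hbq : b ≤ q) : ¬ ann b ≤ q := by
  intro hle
  have hbotT : ∀ t : C, TMem q b t → ¬ t ≤ (⊥ : C) := by
    intro t ht htb
    obtain ⟨s, hsc, hsq, n, hsn⟩ := tmem_invariant' hq.1 ht
    have h0 : comm s (cpow b n) ≤ ⊥ := by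
      have := hsn
      rw [le_bot_iff.mp htb, hsp] at this
      exact this
    -- deduce comm s b = ⊥
    have h1 : comm s b ≤ radical (comm s (cpow b n)) := by
      refine le_sInf fun p hp => ?_
      rcases hp.1.2 _ _ hp.2 with h' | h'
      · exact (comm_le_inf _ _).trans (inf_le_left.trans h')
      · exact (comm_le_inf _ _).trans (inf_le_right.trans (le_of_cpow_le_prime' hp.1 h'))
    have h2 : comm s b ≤ ⊥ := by
      have := h1.trans (radical_mono' h0)
      rwa [hsp] at this
    have h3 : s ≤ ann b := le_ann_iff'.mpr (by rwa [comm_comm])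
    exact hsq (h3.trans hle)
  have hcompT : ∀ t : C, TMem q b t → IsCompactElement t := by
    intro t ht
    induction ht with
    | gen hd _ => exact hd
    | base => exact hb
    | mul _ _ ih1 ih2 => exact comm_isCompact _ _ ih1 ih2
  obtain ⟨x, hx, hxavoid⟩ := exists_prime_avoid' {t : C | TMem q b t}
    ⟨b, TMem.base⟩ (fun t ht => hcompT t ht) (fun t ht => hbotT t ht)
    (fun s hs t ht => ⟨comm s t, TMem.mul hs ht, le_rfl⟩)
  have hxq : x ≤ q := by
    obtain ⟨s, hs, hsup⟩ := compactlyGenerated x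
    rw [← hsup]
    refine sSup_le fun a has => ?_
    by_contra haq
    exact hxavoid a (TMem.gen (hs a has) haq) (hsup ▸ le_sSup has)
  have hxeq : x = q := hq.2 x hx hxq
  exact hxavoid b TMem.base (hxeq ▸ hbq)

theorem statement19 (h : PP C) : Semiprime C ∧ Purified C := by
  have hsp := pp_semiprime' h
  refine ⟨hsp, ?_⟩
  intro p q hp hq hpq
  -- q ≰ p since they are distinct minimal primes
  have hqp : ¬ q ≤ p := fun hle => hpq (hp.2 q hq.1 hle).symm
  -- find a compact b ≤ q with b ≰ p
  obtain ⟨s, hs, hsup⟩ := compactlyGenerated q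
  have : ∃ b ∈ s, ¬ b ≤ p := by
    by_contra hcon
    push_neg at hcon
    exact hqp (hsup ▸ sSup_le hcon)
  obtain ⟨b, hbs, hbp⟩ := this
  have hbc : IsCompactElement b := hs b hbs
  have hbq : b ≤ q := hsup ▸ le_sSup hbs
  refine ⟨ann b, h b hbc, ?_, ?_⟩
  · -- ann b ≤ p since comm b (ann b) = ⊥ ≤ p and b ≰ p
    rcases hp.1.2 b (ann b) (by rw [comm_ann' b]; exact bot_le) with h' | h'
    · exact absurd h' hbp
    · exact h'
  · -- ann (ann b) ≤ q since ann b ≰ q (minimality of q)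
    have h1 : ¬ ann b ≤ q := ann_not_le_of_minPrime' hsp hq hbc hbq
    rcases hq.1.2 (ann b) (ann (ann b)) (by rw [comm_ann' (ann b)]; exact bot_le) with h' | h'
    · exact absurd h' h1
    · exact h'

end CommutatorLattice
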